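/- arXiv:1809.08454 — 3 statements merged into one kernel-verified Lean document; each statement's English description precedes it below -/
import Mathlib

section
/- Let A_n satisfy Assumption (A), and suppose δ₀ is a sufficiently small absolute constant. If np ≥ log(1/(C̄p)) for some C̄ ≥ 1, then for all large n, P( |L(A_n)| ≥ n^{1/3} ) ≤ n^{−1/9}. Moreover, there exists an absolute constant C such that if np ≥ C log n, then P( L(A_n) = ∅ ) ≥ 1 − 1/n. -/
open MeasureTheory ProbabilityTheory Filter Matrix

noncomputable section

/-- Euclidean norm of a vector in `ℝ^n`. -/
def vnorm {n : ℕ} (x : Fin n → ℝ) : ℝ := Real.sqrt (∑ i, x i ^ 2)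

/-- The event that a matrix has a zero row or a zero column. -/
def hasZeroRowOrCol {n : ℕ} (A : Matrix (Fin n) (Fin n) ℝ) : Prop :=
  (∃ i, ∀ j, A i j = 0) ∨ (∃ j, ∀ i, A i j = 0)

/-- The smallest singular value `s_min(A) = inf_{‖x‖₂ = 1} ‖Ax‖₂`. -/
def sMin {n : ℕ} (A : Matrix (Fin n) (Fin n) ℝ) : ℝ :=
  sInf {r | ∃ x : Fin n → ℝ, vnorm x = 1 ∧ r = vnorm (A.mulVec x)}

/-- The `ℓ₂ → ℓ₂` operator norm of a matrix. -/
def opNorm {m n : ℕ} (A : Matrix (Fin m) (Fin n) ℝ) : ℝ :=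
  sSup {r | ∃ x : Fin n → ℝ, vnorm x = 1 ∧ r = vnorm (A.mulVec x)}

/-- `X` is a Bernoulli(p) random variable: it takes the value `1` with probability `p`
and the value `0` with probability `1 - p`. -/
def IsBer {Ωs : Type*} [MeasurableSpace Ωs] (P : Measure Ωs) (p : ℝ) (X : Ωs → ℝ) : Prop :=
  Measurable X ∧ P {ω | X ω = 1} = ENNReal.ofReal p ∧ P {ω | X ω = 0} = ENNReal.ofReal (1 - p)

/-- The family `X` consists of i.i.d. Bernoulli(p) random variables. -/
def IIDBer {Ωs : Type*} [MeasurableSpace Ωs] {ι : Type*} (P : Measure Ωs) (p : ℝ)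
    (X : ι → Ωs → ℝ) : Prop :=
  iIndepFun X P ∧ ∀ i, IsBer P p (X i)

/-- Assumption (A): `{0,1}`-valued entries; diagonal and off-diagonal parts independent;
diagonal entries jointly independent, `a_{ii} ~ Ber(p_i)` with `p_i ≤ p`; each off-diagonal
entry is `Ber(p)` and independent of all other entries except possibly its mirror entry. -/
structure AssumptionA {Ωs : Type*} [MeasurableSpace Ωs] (P : Measure Ωs) {n : ℕ}
    (p : ℝ) (A : Ωs → Matrix (Fin n) (Fin n) ℝ) : Prop where
  zero_one : ∀ ω i j, A ω i j = 0 ∨ A ω i j = 1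
  diag_offdiag_indep :
    IndepFun (fun ω => fun i : Fin n => A ω i i)
      (fun ω => fun q : {q : Fin n × Fin n // q.1 ≠ q.2} => A ω q.1.1 q.1.2) P
  diag_indep : iIndepFun (fun i : Fin n => fun ω => A ω i i) P
  diag_ber : ∀ i, ∃ pi : ℝ, pi ≤ p ∧ IsBer P pi (fun ω => A ω i i)
  offdiag_ber : ∀ i j, i ≠ j → IsBer P p (fun ω => A ω i j)
  offdiag_indep : ∀ i j : Fin n, i ≠ j →
    IndepFun (fun ω => A ω i j)
      (fun ω => fun q : {q : Fin n × Fin n // q ≠ (i, j) ∧ q ≠ (j, i)} => A ω q.1.1 q.1.2) P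

/-- Support of the `j`-th column of a matrix. -/
def colSupp {m n : ℕ} (A : Matrix (Fin m) (Fin n) ℝ) (j : Fin n) : Set (Fin m) :=
  {i | A i j ≠ 0}

/-- Support of the `i`-th row of a matrix. -/
def rowSupp {m n : ℕ} (A : Matrix (Fin m) (Fin n) ℝ) (i : Fin m) : Set (Fin n) :=
  {j | A i j ≠ 0}

/-- The set of light columns: columns whose support has at most `δ₀ n p` elements. -/
def lightSet {n : ℕ} (A : Matrix (Fin n) (Fin n) ℝ) (δ₀ p : ℝ) : Set (Fin n) :=
  {j | ((colSupp A j).ncard : ℝ) ≤ δ₀ * ((n : ℝ) * p)}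

/-- The folded matrix `fold(B) = B⁽¹⁾ − B⁽²⁾`, where `B⁽¹⁾, B⁽²⁾` consist of the first and
the next `⌊n/2⌋` rows of `B`. -/
def fold {n : ℕ} (B : Matrix (Fin n) (Fin n) ℝ) : Matrix (Fin (n / 2)) (Fin n) ℝ :=
  Matrix.of fun i j =>
    B ⟨i.1, by have h := i.2; omega⟩ j - B ⟨i.1 + n / 2, by have h := i.2; omega⟩ j

/-- The structural event `Ω_st` of Lemma 2.1: (1) no heavy rows or columns; (2) light columns
have disjoint supports; (3) the number of light columns connected to any column is at most
`r₀`; (4) the support of a normal column has small intersection with those of the light ones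
(for the folded matrix); (5) the extension property; (6) supports of columns of the matrix
and of its folded version are close in size. -/
def StructEvent {n : ℕ} (A : Matrix (Fin n) (Fin n) ℝ) (p δ₀ C₁ : ℝ) (r₀ : ℕ)
    (c₂ : ℝ) : Prop :=
  (∀ i : Fin n, ((rowSupp A i).ncard : ℝ) ≤ C₁ * ((n : ℝ) * p)) ∧
  (∀ j : Fin n, ((colSupp A j).ncard : ℝ) ≤ C₁ * ((n : ℝ) * p)) ∧
  (∀ i j : Fin n, i ≠ j → i ∈ lightSet A δ₀ p → j ∈ lightSet A δ₀ p →
    colSupp A i ∩ colSupp A j = ∅) ∧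
  (∀ j : Fin n,
    ({i | i ∈ lightSet A δ₀ p ∧ (colSupp A i ∩ colSupp A j).Nonempty}.ncard : ℕ) ≤ r₀) ∧
  (∀ j : Fin n, j ∉ lightSet A δ₀ p →
    (((colSupp (fold A) j ∩ ⋃ i ∈ lightSet A δ₀ p, colSupp (fold A) i).ncard : ℝ)
      ≤ δ₀ / 16 * ((n : ℝ) * p))) ∧
  (∀ I : Finset (Fin n), 2 ≤ I.card → (I.card : ℝ) ≤ c₂ / p →
    (∑ j ∈ I, ((colSupp (fold A) j).ncard : ℝ)) - δ₀ / 16 * ((n : ℝ) * p) * I.card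
      ≤ ((⋃ j ∈ I, colSupp (fold A) j).ncard : ℝ)) ∧
  (∀ j : Fin n,
    |((colSupp A j).ncard : ℝ) - ((colSupp (fold A) j).ncard : ℝ)| ≤ δ₀ / 8 * ((n : ℝ) * p))


/-! ### Auxiliary lemmas -/

open Classical in
lemma ncard_eq_sum_ite {n : ℕ} (s : Set (Fin n)) :
    s.ncard = ∑ i : Fin n, if i ∈ s then 1 else 0 := by
  classical
  have h : s = ↑(Finset.univ.filter fun i => i ∈ s) := by ext i; simp
  rw [h, Set.ncard_coe_finset, Finset.card_filter]
  refine Finset.sum_congr rfl fun i _ => ?_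
  simp

open Classical in
lemma colSupp_ncard_eq {m n : ℕ} (A : Matrix (Fin m) (Fin n) ℝ) (j : Fin n) :
    ((colSupp A j).ncard : ℝ) = ∑ i : Fin m, if A i j = 0 then (0:ℝ) else 1 := by
  classical
  rw [ncard_eq_sum_ite]
  push_cast
  refine Finset.sum_congr rfl fun i _ => ?_
  by_cases h : A i j = 0 <;> simp [colSupp, h]

section Aux

variable {Ωs : Type} [MeasurableSpace Ωs] {P : Measure Ωs} {n : ℕ} {p : ℝ}
  {A : Ωs → Matrix (Fin n) (Fin n) ℝ}

lemma meas_entry (hA : AssumptionA P p A) (i j : Fin n) :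
    Measurable (fun ω => A ω i j) := by
  by_cases h : i = j
  · subst h; obtain ⟨pi, -, hm, -, -⟩ := hA.diag_ber i; exact hm
  · exact (hA.offdiag_ber i j h).1

lemma entry_nonneg (hA : AssumptionA P p A) (ω : Ωs) (i j : Fin n) : 0 ≤ A ω i j := by
  rcases hA.zero_one ω i j with h | h <;> rw [h] <;> norm_num

lemma integral_exp_entry [IsProbabilityMeasure P] (hA : AssumptionA P p A) (hp0 : 0 ≤ p)
    {i j : Fin n} (hij : i ≠ j) (t : ℝ) :
    ∫ ω, Real.exp (t * A ω i j) ∂P = 1 + (Real.exp t - 1) * p := by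
  obtain ⟨hm, h1, -⟩ := hA.offdiag_ber i j hij
  have hs : MeasurableSet {ω | A ω i j = 1} := hm (measurableSet_singleton 1)
  have hXeq : (fun ω => A ω i j) =
      Set.indicator {ω | A ω i j = 1} (fun _ => (1:ℝ)) := by
    funext ω
    rcases hA.zero_one ω i j with h | h
    · rw [h, Set.indicator_apply, if_neg]; simp [h]
    · rw [h, Set.indicator_apply, if_pos]; exact h
  have hXint : Integrable (fun ω => A ω i j) P := by
    rw [hXeq]; exact (integrable_const (1:ℝ)).indicator hs
  have hEX : ∫ ω, A ω i j ∂P = p := by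
    rw [hXeq, integral_indicator_const (1:ℝ) hs, measureReal_def, h1, smul_eq_mul, mul_one,
      ENNReal.toReal_ofReal hp0]
  have hfun : ∀ ω, Real.exp (t * A ω i j) = 1 + (Real.exp t - 1) * A ω i j := by
    intro ω
    rcases hA.zero_one ω i j with h | h <;> rw [h] <;> simp [Real.exp_zero]
  calc ∫ ω, Real.exp (t * A ω i j) ∂P
      = ∫ ω, (1 + (Real.exp t - 1) * A ω i j) ∂P := by
        exact integral_congr_ae (Filter.Eventually.of_forall hfun)
    _ = 1 + (Real.exp t - 1) * p := by
        rw [integral_add (integrable_const 1) (hXint.const_mul _),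
          MeasureTheory.integral_const_mul, integral_const, hEX]
        simp

lemma integral_prod_exp_col [IsProbabilityMeasure P] (hA : AssumptionA P p A)
    (j : Fin n) (t : ℝ) :
    ∀ s : Finset (Fin n), j ∉ s →
      ∫ ω, ∏ i ∈ s, Real.exp (t * A ω i j) ∂P
        = ∏ i ∈ s, ∫ ω, Real.exp (t * A ω i j) ∂P := by
  classical
  intro s
  induction s using Finset.induction_on with
  | empty => simp
  | @insert i s his ih =>
    intro hj
    have hij : i ≠ j := fun h => hj (h ▸ Finset.mem_insert_self i s)
    have hjs : j ∉ s := fun h => hj (Finset.mem_insert_of_mem h)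
    simp only [Finset.prod_insert his]; rw [← ih hjs]
    have hbase := hA.offdiag_indep i j hij
    set ψ : ({q : Fin n × Fin n // q ≠ (i, j) ∧ q ≠ (j, i)} → ℝ) → ℝ :=
      fun F => ∏ k ∈ s, Real.exp (t *
        (if h : ((k, j) ≠ (i, j) ∧ (k, j) ≠ (j, i)) then F ⟨(k, j), h⟩ else 0)) with hψdef
    have hψm : Measurable ψ := by
      refine Finset.measurable_prod _ fun k _ => ?_
      by_cases h : ((k, j) ≠ (i, j) ∧ (k, j) ≠ (j, i))
      · simp only [dif_pos h]
        fun_prop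
      · simp only [dif_neg h]
        exact measurable_const
    have hφm : Measurable fun x : ℝ => Real.exp (t * x) :=
      (measurable_id.const_mul t).exp
    have hindep := hbase.comp hφm hψm
    have hcomp : (ψ ∘ fun ω => fun q : {q : Fin n × Fin n // q ≠ (i, j) ∧ q ≠ (j, i)} =>
        A ω q.1.1 q.1.2) = fun ω => ∏ k ∈ s, Real.exp (t * A ω k j) := by
      funext ω
      simp only [Function.comp_apply, hψdef]
      refine Finset.prod_congr rfl fun k hk => ?_
      have hki : k ≠ i := fun h => his (h ▸ hk)
      have hkj : k ≠ j := fun h => hjs (h ▸ hk)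
      rw [dif_pos ⟨by simp [hki], by simp [hkj]⟩]
    rw [hcomp] at hindep
    have hmY : Measurable fun ω => ∏ k ∈ s, Real.exp (t * A ω k j) :=
      Finset.measurable_prod _ fun k _ => ((meas_entry hA k j).const_mul t).exp
    have hmX : Measurable fun ω => Real.exp (t * A ω i j) :=
      ((meas_entry hA i j).const_mul t).exp
    exact IndepFun.integral_fun_mul_eq_mul_integral hindep hmX.aestronglyMeasurable hmY.aestronglyMeasurable

/-- Chernoff bound: probability that a column has small support. -/
lemma col_small_supp_prob [IsProbabilityMeasure P] (hA : AssumptionA P p A)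
    (hp0 : 0 < p) (hp1 : p < 1) {δ₀ : ℝ} (hδ0 : 0 < δ₀) (hδs : δ₀ ≤ 1 / 100) (j : Fin n) :
    P {ω | ((colSupp (A ω) j).ncard : ℝ) ≤ δ₀ * ((n : ℝ) * p)}
      ≤ ENNReal.ofReal (Real.exp (1 - (9/10) * ((n : ℝ) * p))) := by
  classical
  set t : ℝ := -Real.log 100 with ht_def
  have ht : t ≤ 0 := neg_nonpos.mpr (Real.log_nonneg (by norm_num))
  set S : Ωs → ℝ := fun ω => ∑ i ∈ Finset.univ.erase j, A ω i j with hS_def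
  have hS_nonneg : ∀ ω, 0 ≤ S ω := fun ω =>
    Finset.sum_nonneg fun i _ => entry_nonneg hA ω i j
  have hsub : {ω | ((colSupp (A ω) j).ncard : ℝ) ≤ δ₀ * ((n : ℝ) * p)}
      ⊆ {ω | S ω ≤ δ₀ * ((n : ℝ) * p)} := by
    intro ω hω
    simp only [Set.mem_setOf_eq] at hω ⊢
    refine le_trans ?_ hω
    have hcard : ((colSupp (A ω) j).ncard : ℝ)
        = ∑ i : Fin n, if i ∈ colSupp (A ω) j then (1:ℝ) else 0 := by
      rw [ncard_eq_sum_ite]; push_cast; exact Finset.sum_congr rfl fun i _ => by simp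
    rw [hcard]
    refine le_trans (Finset.sum_le_sum_of_subset_of_nonneg
      (Finset.subset_univ _) fun i _ _ => entry_nonneg hA ω i j) ?_
    refine Finset.sum_le_sum fun i _ => ?_
    rcases hA.zero_one ω i j with h | h
    · rw [h]; split <;> norm_num
    · rw [h, if_pos]; simp [colSupp, h]
  refine le_trans (measure_mono hsub) ?_
  have hmS : Measurable S := Finset.measurable_sum _ fun i _ => meas_entry hA i j
  have h_int : Integrable (fun ω => Real.exp (t * S ω)) P := by
    refine (integrable_const (1:ℝ)).mono'
      ((hmS.const_mul t).exp).aestronglyMeasurable ?_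
    refine Filter.Eventually.of_forall fun ω => ?_
    rw [Real.norm_eq_abs, abs_of_pos (Real.exp_pos _)]
    exact Real.exp_le_one_iff.mpr (mul_nonpos_iff.mpr (Or.inr ⟨ht, hS_nonneg ω⟩))
  have hmgf : mgf S P t = ∏ i ∈ Finset.univ.erase j, (1 + (Real.exp t - 1) * p) := by
    rw [mgf]
    have : ∀ ω, Real.exp (t * S ω) = ∏ i ∈ Finset.univ.erase j, Real.exp (t * A ω i j) := by
      intro ω
      rw [hS_def, Finset.mul_sum, Real.exp_sum]
    rw [integral_congr_ae (Filter.Eventually.of_forall this),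
      integral_prod_exp_col hA j t _ (Finset.notMem_erase j _)]
    exact Finset.prod_congr rfl fun i hi =>
      integral_exp_entry hA hp0.le (Finset.ne_of_mem_erase hi) t
  have hchern := measure_le_le_exp_mul_mgf (X := S) (μ := P)
    (δ₀ * ((n : ℝ) * p)) ht h_int
  rw [hmgf] at hchern
  have hn1 : 1 ≤ n := j.pos
  have hexp_t : Real.exp t = 1 / 100 := by
    rw [ht_def, Real.exp_neg, Real.exp_log (by norm_num : (0:ℝ) < 100)]
    norm_num
  have hcard_erase : (Finset.univ.erase j).card = n - 1 := by
    rw [Finset.card_erase_of_mem (Finset.mem_univ j), Finset.card_univ, Fintype.card_fin]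
  have hnp0 : 0 ≤ (n : ℝ) * p := mul_nonneg (Nat.cast_nonneg n) hp0.le
  have hprod : ∏ i ∈ Finset.univ.erase j, (1 + (Real.exp t - 1) * p)
      ≤ Real.exp (-(99/100) * ((n : ℝ) - 1) * p) := by
    rw [Finset.prod_const, hcard_erase, hexp_t]
    have hb : (1 + (1/100 - 1) * p) ≤ Real.exp (-(99/100) * p) := by
      have := Real.add_one_le_exp (-(99/100) * p)
      linarith
    have hbn : (0:ℝ) ≤ 1 + (1/100 - 1) * p := by nlinarith
    calc (1 + (1/100 - 1) * p) ^ (n - 1)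
        ≤ (Real.exp (-(99/100) * p)) ^ (n - 1) := pow_le_pow_left₀ hbn hb _
      _ = Real.exp (((n - 1 : ℕ) : ℝ) * (-(99/100) * p)) := (Real.exp_nat_mul _ _).symm
      _ = Real.exp (-(99/100) * ((n : ℝ) - 1) * p) := by
          rw [Nat.cast_sub hn1]; push_cast; ring_nf
  have hlog100 : Real.log 100 ≤ 5 := by
    have h1 : (100:ℝ) ≤ Real.exp 5 := by
      have h5 : Real.exp 5 = Real.exp 1 ^ 5 := by
        rw [← Real.exp_nat_mul]; norm_num
      rw [h5]
      calc (100:ℝ) ≤ (2.7182818283:ℝ) ^ 5 := by norm_num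
        _ ≤ Real.exp 1 ^ 5 := pow_le_pow_left₀ (by norm_num) Real.exp_one_gt_d9.le 5
    calc Real.log 100 ≤ Real.log (Real.exp 5) :=
          Real.log_le_log (by norm_num) h1
      _ = 5 := Real.log_exp 5
  have hfinal : Real.exp (-t * (δ₀ * ((n : ℝ) * p))) *
      ∏ i ∈ Finset.univ.erase j, (1 + (Real.exp t - 1) * p)
        ≤ Real.exp (1 - (9/10) * ((n : ℝ) * p)) := by
    refine le_trans (mul_le_mul_of_nonneg_left hprod (Real.exp_pos _).le) ?_
    rw [← Real.exp_add]
    refine Real.exp_le_exp.mpr ?_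
    have hta : -t * (δ₀ * ((n : ℝ) * p)) ≤ (1/20) * ((n : ℝ) * p) := by
      rw [ht_def, neg_neg]
      calc Real.log 100 * (δ₀ * ((n : ℝ) * p)) ≤ 5 * ((1/100) * ((n : ℝ) * p)) := by
            refine mul_le_mul hlog100 (mul_le_mul_of_nonneg_right hδs hnp0) ?_ (by norm_num)
            exact mul_nonneg hδ0.le hnp0
        _ = (1/20) * ((n : ℝ) * p) := by ring
    nlinarith [hnp0, hp1.le, hp0.le]
  have hfin : (P {ω | S ω ≤ δ₀ * ((n : ℝ) * p)}).toReal
      ≤ Real.exp (1 - (9/10) * ((n : ℝ) * p)) := le_trans hchern hfinal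
  calc P {ω | S ω ≤ δ₀ * ((n : ℝ) * p)}
      = ENNReal.ofReal ((P {ω | S ω ≤ δ₀ * ((n : ℝ) * p)}).toReal) :=
        (ENNReal.ofReal_toReal (measure_ne_top P _)).symm
    _ ≤ ENNReal.ofReal (Real.exp (1 - (9/10) * ((n : ℝ) * p))) :=
        ENNReal.ofReal_le_ofReal hfin

lemma meas_light_event (hA : AssumptionA P p A) (δ₀ : ℝ) (j : Fin n) :
    MeasurableSet {ω | ((colSupp (A ω) j).ncard : ℝ) ≤ δ₀ * ((n : ℝ) * p)} := by
  classical
  have hmf : Measurable fun ω => ((colSupp (A ω) j).ncard : ℝ) := by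
    have heq : (fun ω => ((colSupp (A ω) j).ncard : ℝ))
        = fun ω => ∑ i : Fin n, if A ω i j = 0 then (0:ℝ) else 1 :=
      funext fun ω => colSupp_ncard_eq (A ω) j
    rw [heq]
    refine Finset.measurable_sum _ fun i _ => Measurable.ite ?_
      measurable_const measurable_const
    exact (meas_entry hA i j) (measurableSet_singleton 0)
  exact measurableSet_le hmf measurable_const

end Aux

open scoped ENNReal in
lemma eventually_good {Cb : ℝ} (hCb : 1 ≤ Cb) : ∀ᶠ n : ℕ in atTop,
    2 ≤ n ∧ Real.log (Cb * Real.log n) ≤ (1/100) * Real.log n ∧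
      1 ≤ ((9/10) * (99/100) - 7/9) * Real.log n := by
  have hlog : Tendsto (fun n : ℕ => Real.log n) atTop atTop :=
    Real.tendsto_log_atTop.comp tendsto_natCast_atTop_atTop
  have hA1 : ∀ᶠ n : ℕ in atTop, 200 * Real.log Cb ≤ Real.log n :=
    hlog.eventually_ge_atTop _
  have hA2 : ∀ᶠ n : ℕ in atTop,
      ‖Real.log (Real.log n)‖ ≤ (1/200) * ‖Real.log n‖ := by
    have hoo := Real.isLittleO_log_id_atTop.comp_tendsto hlog
    exact hoo.def (by norm_num : (0:ℝ) < 1/200)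
  have hA4 : ∀ᶠ n : ℕ in atTop,
      1 / ((9/10) * (99/100) - 7/9) ≤ Real.log n := hlog.eventually_ge_atTop _
  have hA5 : ∀ᶠ n : ℕ in atTop, 2 ≤ n := Filter.eventually_ge_atTop 2
  filter_upwards [hA1, hA2, hA4, hA5] with n h1 h2 h4 h5
  have hn1 : (1:ℝ) < n := by exact_mod_cast Nat.lt_of_lt_of_le one_lt_two h5
  have hlogn : 0 < Real.log n := Real.log_pos hn1
  have hc : (0:ℝ) < (9/10) * (99/100) - 7/9 := by norm_num
  have hCb0 : (0:ℝ) < Cb := lt_of_lt_of_le zero_lt_one hCb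
  have hlCb : 0 ≤ Real.log Cb := Real.log_nonneg hCb
  refine ⟨h5, ?_, ?_⟩
  · rw [Real.log_mul (ne_of_gt hCb0) (ne_of_gt hlogn)]
    have hll : Real.log (Real.log n) ≤ (1/200) * Real.log n := by
      calc Real.log (Real.log n) ≤ ‖Real.log (Real.log n)‖ := le_abs_self _
        _ ≤ (1/200) * ‖Real.log n‖ := h2
        _ = (1/200) * Real.log n := by rw [Real.norm_eq_abs, abs_of_pos hlogn]
    linarith
  · have hmul := mul_le_mul_of_nonneg_left h4 hc.le
    rw [mul_one_div, div_self (ne_of_gt hc)] at hmul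
    linarith

open scoped ENNReal

section Main

variable {Ωs : Type} [MeasurableSpace Ωs] {P : Measure Ωs} {n : ℕ} {p : ℝ}
  {A : Ωs → Matrix (Fin n) (Fin n) ℝ} {δ₀ : ℝ}

/-- Part 1 core estimate for a single good `n`. -/
lemma part1_core [IsProbabilityMeasure P] {Cb : ℝ} (hCb : 1 ≤ Cb)
    (h2 : 2 ≤ n) (hE2 : Real.log (Cb * Real.log n) ≤ (1/100) * Real.log n)
    (hE3 : 1 ≤ ((9/10) * (99/100) - 7/9) * Real.log n)
    (hδ0 : 0 < δ₀) (hδs : δ₀ ≤ 1/100)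
    (hp0 : 0 < p) (hp1 : p < 1) (hnp : Real.log (1 / (Cb * p)) ≤ (n : ℝ) * p)
    (hA : AssumptionA P p A) :
    P {ω | (n : ℝ) ^ ((1 : ℝ) / 3) ≤ ((lightSet (A ω) δ₀ p).ncard : ℝ)}
      ≤ ENNReal.ofReal ((n : ℝ) ^ (-(1 : ℝ) / 9)) := by
  classical
  have hn0 : (0:ℝ) < n := by positivity
  have hn1 : (1:ℝ) < n := by exact_mod_cast Nat.lt_of_lt_of_le one_lt_two h2
  have hlogn : 0 < Real.log n := Real.log_pos hn1
  have hx0 : 0 < (n:ℝ) * p := by positivity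
  have hCb0 : (0:ℝ) < Cb := lt_of_lt_of_le zero_lt_one hCb
  -- np is essentially at least log n
  have hx : (99/100) * Real.log n ≤ (n:ℝ) * p := by
    by_cases hcase : Real.log n ≤ (n:ℝ) * p
    · nlinarith
    · push_neg at hcase
      have heq : Real.log (1 / (Cb * p)) = Real.log n - Real.log (Cb * ((n:ℝ) * p)) := by
        rw [one_div, Real.log_inv]
        have hrw : Cb * p = (Cb * ((n:ℝ) * p)) / n := by
          field_simp
        rw [hrw, Real.log_div (by positivity) (ne_of_gt hn0)]
        ring
      have hle : Real.log (Cb * ((n:ℝ) * p)) ≤ Real.log (Cb * Real.log n) :=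
        Real.log_le_log (by positivity) (by nlinarith)
      rw [heq] at hnp
      linarith
  -- pointwise tail bound
  set Q : ℝ := Real.exp (1 - (9/10) * ((n:ℝ) * p)) with hQ_def
  have hQn : Q ≤ (n:ℝ) ^ (-(7:ℝ)/9) := by
    rw [hQ_def, Real.rpow_def_of_pos hn0]
    exact Real.exp_le_exp.mpr (by nlinarith)
  -- events
  set E : Fin n → Set Ωs :=
    fun j => {ω | ((colSupp (A ω) j).ncard : ℝ) ≤ δ₀ * ((n : ℝ) * p)} with hE_def
  have hME : ∀ j, MeasurableSet (E j) := fun j => meas_light_event hA δ₀ j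
  have hPE : ∀ j, P (E j) ≤ ENNReal.ofReal Q := fun j =>
    col_small_supp_prob hA hp0 hp1 hδ0 hδs j
  -- the counting function
  set f : Ωs → ℝ≥0∞ := fun ω => ∑ j : Fin n, (E j).indicator (1 : Ωs → ℝ≥0∞) ω with hf_def
  have hf_meas : Measurable f :=
    Finset.measurable_sum _ fun j _ => measurable_one.indicator (hME j)
  have hfval : ∀ ω, ((lightSet (A ω) δ₀ p).ncard : ℝ≥0∞) = f ω := by
    intro ω
    rw [hf_def, ncard_eq_sum_ite (lightSet (A ω) δ₀ p)]
    push_cast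
    refine Finset.sum_congr rfl fun j _ => ?_
    by_cases h : j ∈ lightSet (A ω) δ₀ p
    · rw [Set.indicator_of_mem (show ω ∈ E j from h)]
      simp [h]
    · rw [Set.indicator_of_notMem (show ω ∉ E j from h)]
      simp [h]
  have hlint : ∫⁻ ω, f ω ∂P ≤ (n : ℝ≥0∞) * ENNReal.ofReal Q := by
    rw [hf_def, lintegral_finset_sum _ fun j _ => measurable_one.indicator (hME j)]
    calc ∑ j : Fin n, ∫⁻ ω, (E j).indicator 1 ω ∂P
        = ∑ j : Fin n, P (E j) := by
          exact Finset.sum_congr rfl fun j _ => lintegral_indicator_one (hME j)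
      _ ≤ ∑ _j : Fin n, ENNReal.ofReal Q := Finset.sum_le_sum fun j _ => hPE j
      _ = (n : ℝ≥0∞) * ENNReal.ofReal Q := by
          rw [Finset.sum_const, Finset.card_univ, Fintype.card_fin, nsmul_eq_mul]
  set ε : ℝ≥0∞ := ENNReal.ofReal ((n : ℝ) ^ ((1:ℝ)/3)) with hε_def
  have hmono : {ω | (n : ℝ) ^ ((1 : ℝ) / 3) ≤ ((lightSet (A ω) δ₀ p).ncard : ℝ)}
      ⊆ {ω | ε ≤ f ω} := by
    intro ω hω
    simp only [Set.mem_setOf_eq] at hω ⊢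
    rw [← hfval ω, hε_def]
    calc ENNReal.ofReal ((n : ℝ) ^ ((1:ℝ)/3))
        ≤ ENNReal.ofReal (((lightSet (A ω) δ₀ p).ncard : ℝ)) :=
          ENNReal.ofReal_le_ofReal hω
      _ = ((lightSet (A ω) δ₀ p).ncard : ℝ≥0∞) := ENNReal.ofReal_natCast _
  have hmarkov := mul_meas_ge_le_lintegral₀ (μ := P) hf_meas.aemeasurable ε
  have hchain : ε * P {ω | (n : ℝ) ^ ((1 : ℝ) / 3) ≤ ((lightSet (A ω) δ₀ p).ncard : ℝ)}
      ≤ (n : ℝ≥0∞) * ENNReal.ofReal Q :=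
    le_trans (mul_le_mul_right (measure_mono hmono) ε) (le_trans hmarkov hlint)
  -- numeric comparison
  have hnum : (n : ℝ) * Q ≤ (n : ℝ) ^ ((1:ℝ)/3) * (n : ℝ) ^ (-(1:ℝ)/9) := by
    have h1 : (n : ℝ) * Q ≤ (n : ℝ) * (n : ℝ) ^ (-(7:ℝ)/9) :=
      mul_le_mul_of_nonneg_left hQn hn0.le
    have h2' : (n : ℝ) * (n : ℝ) ^ (-(7:ℝ)/9) = (n : ℝ) ^ ((1:ℝ) + -(7:ℝ)/9) := by
      rw [Real.rpow_add hn0, Real.rpow_one]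
    have h3' : (n : ℝ) ^ ((1:ℝ)/3) * (n : ℝ) ^ (-(1:ℝ)/9)
        = (n : ℝ) ^ ((1:ℝ)/3 + -(1:ℝ)/9) := (Real.rpow_add hn0 _ _).symm
    rw [h3']
    have : (1:ℝ) + -(7:ℝ)/9 = (1:ℝ)/3 + -(1:ℝ)/9 := by norm_num
    rw [h2', this] at h1
    exact h1
  have hENN : (n : ℝ≥0∞) * ENNReal.ofReal Q
      ≤ ε * ENNReal.ofReal ((n : ℝ) ^ (-(1:ℝ)/9)) := by
    rw [hε_def, ← ENNReal.ofReal_natCast n,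
      ← ENNReal.ofReal_mul (Nat.cast_nonneg n),
      ← ENNReal.ofReal_mul (Real.rpow_nonneg hn0.le _)]
    exact ENNReal.ofReal_le_ofReal hnum
  have hε0 : ε ≠ 0 :=
    ne_of_gt (ENNReal.ofReal_pos.mpr (Real.rpow_pos_of_pos hn0 _))
  have hεtop : ε ≠ ⊤ := ENNReal.ofReal_ne_top
  exact (ENNReal.mul_le_mul_iff_right hε0 hεtop).mp (le_trans hchain hENN)

/-- Part 2 core estimate. -/
lemma part2_core [IsProbabilityMeasure P]
    (hδ0 : 0 < δ₀) (hδs : δ₀ ≤ 1/100)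
    (hp0 : 0 < p) (hp1 : p < 1) (hnp : 10 * Real.log n ≤ (n : ℝ) * p)
    (hA : AssumptionA P p A) :
    ENNReal.ofReal (1 - 1 / n) ≤ P {ω | lightSet (A ω) δ₀ p = ∅} := by
  classical
  rcases Nat.lt_or_ge n 2 with hn | hn
  · interval_cases n
    · have hset : {ω | lightSet (A ω) δ₀ p = ∅} = Set.univ := by
        ext ω
        simp only [Set.mem_setOf_eq, Set.mem_univ, iff_true]
        exact Set.eq_empty_of_isEmpty _
      rw [hset, measure_univ]
      simp
    · norm_num
  · have hn0 : (0:ℝ) < n := by positivity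
    have hn1 : (1:ℝ) < n := by exact_mod_cast Nat.lt_of_lt_of_le one_lt_two hn
    have hlogn : 0 < Real.log n := Real.log_pos hn1
    set Q : ℝ := Real.exp (1 - (9/10) * ((n:ℝ) * p)) with hQ_def
    set E : Fin n → Set Ωs :=
      fun j => {ω | ((colSupp (A ω) j).ncard : ℝ) ≤ δ₀ * ((n : ℝ) * p)} with hE_def
    have hPE : ∀ j, P (E j) ≤ ENNReal.ofReal Q := fun j =>
      col_small_supp_prob hA hp0 hp1 hδ0 hδs j
    set Sc : Set Ωs := {ω | lightSet (A ω) δ₀ p ≠ ∅} with hSc_def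
    have hU : Sc ⊆ ⋃ j, E j := by
      intro ω hω
      obtain ⟨j, hj⟩ := Set.nonempty_iff_ne_empty.mpr hω
      exact Set.mem_iUnion.mpr ⟨j, hj⟩
    have hnum : (n:ℝ) * Q ≤ 1 / n := by
      have hL2 : Real.log 2 ≤ Real.log n :=
        Real.log_le_log (by norm_num) (by exact_mod_cast hn)
      have h7 : 1 ≤ 7 * Real.log n := by nlinarith [Real.log_two_gt_d9]
      calc (n:ℝ) * Q = Real.exp (Real.log n + (1 - (9/10) * ((n:ℝ) * p))) := by
            rw [Real.exp_add, Real.exp_log hn0]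
        _ ≤ Real.exp (-(Real.log n)) := Real.exp_le_exp.mpr (by nlinarith)
        _ = 1 / n := by rw [Real.exp_neg, Real.exp_log hn0, one_div]
    have hPU : P Sc ≤ ENNReal.ofReal (1 / n) := by
      calc P Sc ≤ P (⋃ j, E j) := measure_mono hU
        _ ≤ ∑ j : Fin n, P (E j) := measure_iUnion_fintype_le P E
        _ ≤ ∑ _j : Fin n, ENNReal.ofReal Q := Finset.sum_le_sum fun j _ => hPE j
        _ = (n : ℝ≥0∞) * ENNReal.ofReal Q := by
            rw [Finset.sum_const, Finset.card_univ, Fintype.card_fin, nsmul_eq_mul]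
        _ = ENNReal.ofReal ((n:ℝ) * Q) := by
            rw [← ENNReal.ofReal_natCast n, ← ENNReal.ofReal_mul (Nat.cast_nonneg n)]
        _ ≤ ENNReal.ofReal (1 / n) := ENNReal.ofReal_le_ofReal hnum
    have hcompl : {ω | lightSet (A ω) δ₀ p = ∅} = Scᶜ := by
      ext ω
      simp [hSc_def]
    have h1le : (1:ℝ≥0∞) ≤ P Scᶜ + P Sc := by
      rw [← measure_univ (μ := P), ← Set.compl_union_self Sc]
      exact measure_union_le _ _
    have hfrac : (0:ℝ) ≤ 1 - 1 / (n:ℝ) := by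
      have : 1 / (n:ℝ) ≤ 1 := by
        rw [div_le_one hn0]
        exact hn1.le
      linarith
    rw [hcompl]
    calc ENNReal.ofReal (1 - 1 / (n:ℝ))
        ≤ 1 - ENNReal.ofReal (1 / (n:ℝ)) := by
          refine ENNReal.le_sub_of_add_le_right ENNReal.ofReal_ne_top ?_
          rw [← ENNReal.ofReal_add hfrac (by positivity : (0:ℝ) ≤ 1 / (n:ℝ))]
          norm_num
      _ ≤ 1 - P Sc := tsub_le_tsub_left hPU 1
      _ ≤ P Scᶜ := tsub_le_iff_right.mpr h1le


end Main

/-- bounds on the number of light columns. If `np ≥ log(1/(C̄p))` then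
`|L(A_n)| < n^{1/3}` except with probability `n^{-1/9}`, and if `np ≥ C log n` then there
are no light columns except with probability `1/n`. -/
theorem light_columns_card_bound :
    ∃ δs C : ℝ, 0 < δs ∧ δs < 1 / 10 ∧ 0 < C ∧
      ∀ δ₀ : ℝ, 0 < δ₀ → δ₀ ≤ δs →
        ((∀ Cb : ℝ, 1 ≤ Cb →
            ∃ N : ℕ, ∀ n, N ≤ n →
              ∀ (p : ℝ) (Ωs : Type) [MeasurableSpace Ωs] (P : Measure Ωs),
                IsProbabilityMeasure P →
                ∀ A : Ωs → Matrix (Fin n) (Fin n) ℝ,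
                  0 < p → p < 1 → Real.log (1 / (Cb * p)) ≤ (n : ℝ) * p →
                  AssumptionA P p A →
                  P {ω | (n : ℝ) ^ ((1 : ℝ) / 3) ≤ ((lightSet (A ω) δ₀ p).ncard : ℝ)}
                    ≤ ENNReal.ofReal ((n : ℝ) ^ (-(1 : ℝ) / 9))) ∧
          (∀ (n : ℕ) (p : ℝ) (Ωs : Type) [MeasurableSpace Ωs] (P : Measure Ωs),
              IsProbabilityMeasure P →
              ∀ A : Ωs → Matrix (Fin n) (Fin n) ℝ,
                0 < p → p < 1 → C * Real.log n ≤ (n : ℝ) * p →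
                AssumptionA P p A →
                ENNReal.ofReal (1 - 1 / n) ≤ P {ω | lightSet (A ω) δ₀ p = ∅})) := by
  refine ⟨1/100, 10, by norm_num, by norm_num, by norm_num, ?_⟩
  intro δ₀ hδ0 hδs
  constructor
  · intro Cb hCb
    obtain ⟨N, hN⟩ := Filter.eventually_atTop.mp (eventually_good hCb)
    refine ⟨N, fun n hn p Ωs _ P hP A hp0 hp1 hnp hA => ?_⟩
    haveI := hP
    obtain ⟨h2, hE2, hE3⟩ := hN n hn
    exact part1_core hCb h2 hE2 hE3 hδ0 hδs hp0 hp1 hnp hA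
  · intro n p Ωs _ P hP A hp0 hp1 hnp hA
    haveI := hP
    exact part2_core hδ0 hδs hp0 hp1 hnp hA
end
end

section
/- Let Ã be an n×n real matrix, let Ã_{,1} be its first column, and let H₁ be the linear span of its remaining columns Ã_{,2}, …, Ã_{,n}. Let C be the (n−1)×(n−1) matrix that is the transpose of the submatrix of Ã obtained by removing its first row and first column, let xᵀ ∈ R^{n−1} be the first row of Ã with the entry a₁₁ removed, and let y ∈ R^{n−1} be the first column of Ã with the entry a₁₁ removed. Then: (i) if C is not invertible, dist(Ã_{,1}, H₁) ≥ sup_{v ∈ Ker(C), ‖v‖₂ = 1} |⟨y, v⟩|; (ii) if C is invertible, dist(Ã_{,1}, H₁) = |⟨C^{−1} x, y⟩ − a₁₁| / √(1 + ‖C^{−1} x‖₂²). -/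
open MeasureTheory ProbabilityTheory Filter Matrix

noncomputable section

/-- Euclidean distance of a vector to a set of vectors. -/
def distToSet {n : ℕ} (v : Fin n → ℝ) (S : Set (Fin n → ℝ)) : ℝ :=
  ⨅ h : S, vnorm (v - (h : Fin n → ℝ))

lemma vnorm_nonneg {m : ℕ} (x : Fin m → ℝ) : 0 ≤ vnorm x := Real.sqrt_nonneg _

lemma abs_ip_le {m : ℕ} (f g : Fin m → ℝ) : |∑ i, f i * g i| ≤ vnorm f * vnorm g := by
  have h1 := Real.sum_mul_le_sqrt_mul_sqrt Finset.univ f g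
  have h2 := Real.sum_mul_le_sqrt_mul_sqrt Finset.univ (fun i => -f i) g
  simp only [neg_mul, Finset.sum_neg_distrib, neg_sq] at h2
  rw [abs_le]
  constructor
  · unfold vnorm; linarith
  · exact h1

lemma ipLinear {m : ℕ} (w : Fin m → ℝ) (H : Set (Fin m → ℝ))
    (hH : ∀ s ∈ H, ∑ i, s i * w i = 0) :
    ∀ h ∈ Submodule.span ℝ H, ∑ i, h i * w i = 0 := by
  let φ : (Fin m → ℝ) →ₗ[ℝ] ℝ :=
    { toFun := fun v => ∑ i, v i * w i
      map_add' := fun a b => by simp [add_mul, Finset.sum_add_distrib]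
      map_smul' := fun c a => by simp [Finset.mul_sum, mul_assoc] }
  have hle : Submodule.span ℝ H ≤ LinearMap.ker φ :=
    Submodule.span_le.2 fun s hs => hH s hs
  exact fun h hh => hle hh

lemma perp_le_dist {m : ℕ} (v w : Fin m → ℝ) (H : Submodule ℝ (Fin m → ℝ))
    (hw : ∀ h ∈ H, ∑ i, h i * w i = 0) (hw0 : 0 < vnorm w) :
    |∑ i, v i * w i| / vnorm w ≤ distToSet v ↑H := by
  haveI : Nonempty ↥(H : Set (Fin m → ℝ)) := ⟨⟨0, H.zero_mem⟩⟩
  apply le_ciInf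
  rintro ⟨h, hh⟩
  rw [div_le_iff₀ hw0]
  have heq : ∑ i, (v - h) i * w i = ∑ i, v i * w i := by
    simp only [Pi.sub_apply, sub_mul, Finset.sum_sub_distrib]
    rw [hw h hh, sub_zero]
  calc |∑ i, v i * w i| = |∑ i, (v - h) i * w i| := by rw [heq]
    _ ≤ vnorm (v - h) * vnorm w := abs_ip_le _ _

lemma dist_le {m : ℕ} (v : Fin m → ℝ) (H : Submodule ℝ (Fin m → ℝ)) (h : Fin m → ℝ)
    (hh : h ∈ H) : distToSet v ↑H ≤ vnorm (v - h) := by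
  apply ciInf_le _ (⟨h, hh⟩ : (H : Set (Fin m → ℝ)))
  exact ⟨0, by rintro r ⟨z, rfl⟩; exact vnorm_nonneg _⟩

lemma dist_nn {m : ℕ} (v : Fin m → ℝ) (S : Set (Fin m → ℝ)) : 0 ≤ distToSet v S :=
  Real.iInf_nonneg fun _ => vnorm_nonneg _

/-- distance via quadratic forms (Proposition 4.2). Here `C` is the transpose
of the minor of `Ã` obtained by removing the first row and column, `x` is the first row and
`y` is the first column of `Ã`, both with the entry `a₁₁` removed, and `H₁` is the span of
the columns of `Ã` other than the first. -/
theorem distance_via_quadratic_forms (n : ℕ) (A : Matrix (Fin (n + 1)) (Fin (n + 1)) ℝ) :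
    (¬ IsUnit ((A.submatrix Fin.succ Fin.succ)ᵀ).det →
      (⨆ v : {v : Fin n → ℝ //
          ((A.submatrix Fin.succ Fin.succ)ᵀ).mulVec v = 0 ∧ vnorm v = 1},
        |∑ i, A (Fin.succ i) 0 * (v : Fin n → ℝ) i|)
      ≤ distToSet (fun i => A i 0)
          ↑(Submodule.span ℝ
            {c : Fin (n + 1) → ℝ | ∃ j : Fin (n + 1), j ≠ 0 ∧ c = fun i => A i j})) ∧
    (IsUnit ((A.submatrix Fin.succ Fin.succ)ᵀ).det →
      distToSet (fun i => A i 0)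
          ↑(Submodule.span ℝ
            {c : Fin (n + 1) → ℝ | ∃ j : Fin (n + 1), j ≠ 0 ∧ c = fun i => A i j})
        = |(∑ i, ((A.submatrix Fin.succ Fin.succ)ᵀ)⁻¹.mulVec
              (fun j => A 0 (Fin.succ j)) i * A (Fin.succ i) 0) - A 0 0| /
          Real.sqrt (1 + vnorm (((A.submatrix Fin.succ Fin.succ)ᵀ)⁻¹.mulVec
              (fun j => A 0 (Fin.succ j))) ^ 2)) := by
  set C : Matrix (Fin n) (Fin n) ℝ := (A.submatrix Fin.succ Fin.succ)ᵀ with hC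
  set S : Set (Fin (n + 1) → ℝ) :=
    {c : Fin (n + 1) → ℝ | ∃ j : Fin (n + 1), j ≠ 0 ∧ c = fun i => A i j} with hS
  set H : Submodule ℝ (Fin (n + 1) → ℝ) := Submodule.span ℝ S with hH
  set c0 : Fin (n + 1) → ℝ := fun i => A i 0 with hc0
  constructor
  · -- Part (i)
    intro _
    apply Real.iSup_le _ (dist_nn _ _)
    rintro ⟨v, hv, hv1⟩
    set w : Fin (n + 1) → ℝ := Fin.cons 0 v with hw
    have hwn : vnorm w = 1 := by
      rw [← hv1]
      unfold vnorm
      rw [Fin.sum_univ_succ]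
      simp [hw]
    have hperp : ∀ h ∈ H, ∑ i, h i * w i = 0 := by
      apply ipLinear
      rintro s ⟨j, hj, rfl⟩
      obtain ⟨k, rfl⟩ := Fin.exists_succ_eq_of_ne_zero hj
      rw [Fin.sum_univ_succ]
      simp only [hw, Fin.cons_zero, Fin.cons_succ, mul_zero, zero_add]
      have : ∑ i, A i.succ k.succ * v i = C.mulVec v k := by
        rw [Matrix.mulVec]
        simp [dotProduct, hC, Matrix.transpose_apply, Matrix.submatrix_apply, mul_comm]
      rw [this, hv]
      rfl
    have hkey := perp_le_dist c0 w H hperp (by rw [hwn]; norm_num)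
    rw [hwn, div_one] at hkey
    have : ∑ i, c0 i * w i = ∑ i, A i.succ 0 * v i := by
      rw [Fin.sum_univ_succ]
      simp [hw, hc0]
    rwa [this] at hkey
  · -- Part (ii)
    intro hdet
    set x : Fin n → ℝ := fun j => A 0 (Fin.succ j) with hx
    set u : Fin n → ℝ := C⁻¹.mulVec x with hu
    set y : Fin n → ℝ := fun i => A (Fin.succ i) 0 with hy
    set d : ℝ := 1 + ∑ i, u i ^ 2 with hd
    have hd1 : (1:ℝ) ≤ d := by
      have : 0 ≤ ∑ i, u i ^ 2 := Finset.sum_nonneg fun i _ => sq_nonneg _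
      linarith
    have hd0 : 0 < d := lt_of_lt_of_le one_pos hd1
    have hsd : 0 < Real.sqrt d := Real.sqrt_pos.2 hd0
    set w : Fin (n + 1) → ℝ := Fin.cons (-1) u with hw
    have hwn : vnorm w = Real.sqrt d := by
      unfold vnorm
      rw [Fin.sum_univ_succ]
      simp [hw, hd]
    have hCu : C.mulVec u = x := by
      rw [hu, Matrix.mulVec_mulVec, Matrix.mul_nonsing_inv _ hdet, Matrix.one_mulVec]
    -- inner product of c0 with w
    set a : ℝ := ∑ i, c0 i * w i with ha
    have ha' : a = (∑ i, u i * A (Fin.succ i) 0) - A 0 0 := by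
      rw [ha, Fin.sum_univ_succ]
      simp only [hw, hc0, Fin.cons_zero, Fin.cons_succ]
      ring_nf
      congr 1
      exact Finset.sum_congr rfl fun i _ => mul_comm _ _
    -- RHS equals |a| / sqrt d
    have hRHS : |(∑ i, u i * A (Fin.succ i) 0) - A 0 0| /
        Real.sqrt (1 + vnorm u ^ 2) = |a| / Real.sqrt d := by
      rw [ha']
      congr 2
      rw [hd]
      congr 1
      unfold vnorm
      rw [Real.sq_sqrt (Finset.sum_nonneg fun i _ => sq_nonneg _)]
    rw [show (∑ i, ((A.submatrix Fin.succ Fin.succ)ᵀ)⁻¹.mulVec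
              (fun j => A 0 (Fin.succ j)) i * A (Fin.succ i) 0) = ∑ i, u i * A (Fin.succ i) 0 from rfl,
        show Real.sqrt (1 + vnorm (((A.submatrix Fin.succ Fin.succ)ᵀ)⁻¹.mulVec
              (fun j => A 0 (Fin.succ j))) ^ 2) = Real.sqrt (1 + vnorm u ^ 2) from rfl, hRHS]
    -- orthogonality of w to H
    have hperp : ∀ h ∈ H, ∑ i, h i * w i = 0 := by
      apply ipLinear
      rintro s ⟨j, hj, rfl⟩
      obtain ⟨k, rfl⟩ := Fin.exists_succ_eq_of_ne_zero hj
      rw [Fin.sum_univ_succ]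
      simp only [hw, Fin.cons_zero, Fin.cons_succ, mul_neg, mul_one]
      have : ∑ i, A i.succ k.succ * u i = C.mulVec u k := by
        rw [Matrix.mulVec]
        simp [dotProduct, hC, Matrix.transpose_apply, Matrix.submatrix_apply, mul_comm]
      rw [this, hCu]
      simp [hx]
    apply le_antisymm
    · -- dist ≤ |a|/√d : exhibit the projection
      set s : ℝ := a / d with hs
      have hsd' : s * d = a := div_mul_cancel₀ _ (ne_of_gt hd0)
      set B : Matrix (Fin n) (Fin n) ℝ := A.submatrix Fin.succ Fin.succ with hB
      have hBdet : IsUnit B.det := by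
        rwa [hC, Matrix.det_transpose] at hdet
      set h' : Fin n → ℝ := fun i => y i - s * u i with hh'
      set α : Fin n → ℝ := B⁻¹.mulVec h' with hα
      have hBα : B.mulVec α = h' := by
        rw [hα, Matrix.mulVec_mulVec, Matrix.mul_nonsing_inv _ hBdet, Matrix.one_mulVec]
      set h : Fin (n + 1) → ℝ := c0 - s • w with hhdef
      have hmem : h ∈ H := by
        have hrepr : h = ∑ j : Fin (n + 1), (Fin.cons 0 α : Fin (n + 1) → ℝ) j • (fun i => A i j) := by
          funext i
          have hsum : (∑ j : Fin (n + 1), (Fin.cons 0 α : Fin (n + 1) → ℝ) j • (fun i' => A i' j)) i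
              = ∑ j : Fin n, α j * A i j.succ := by
            rw [Finset.sum_apply, Fin.sum_univ_succ]
            simp
          rw [hsum]
          induction i using Fin.cases with
          | zero =>
            -- need : h 0 = ∑ j, α j * A 0 j.succ
            have h0 : h 0 = A 0 0 + s := by
              simp [hhdef, hc0, hw, Fin.cons_zero]
            have hdot : ∑ j, α j * A 0 j.succ = ∑ k, h' k * u k := by
              calc ∑ j, α j * A 0 j.succ = α ⬝ᵥ (C.mulVec u) := by
                    rw [hCu]; rfl
                _ = (α ᵥ* C) ⬝ᵥ u := (Matrix.dotProduct_mulVec _ _ _)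
                _ = (B.mulVec α) ⬝ᵥ u := by rw [hC, Matrix.vecMul_transpose]
                _ = ∑ k, h' k * u k := by rw [hBα]; rfl
            rw [h0, hdot]
            have hexp : ∑ k, h' k * u k = (∑ k, y k * u k) - s * ∑ k, u k ^ 2 := by
              simp only [hh', sub_mul, Finset.sum_sub_distrib, Finset.mul_sum]
              congr 1
              exact Finset.sum_congr rfl fun k _ => by ring
            rw [hexp]
            have ha2 : a = (∑ k, y k * u k) - A 0 0 := by
              rw [ha']
              congr 1
              exact Finset.sum_congr rfl fun k _ => mul_comm _ _
            have : s * (1 + ∑ k, u k ^ 2) = (∑ k, y k * u k) - A 0 0 := by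
              rw [← hd, hsd', ha2]
            nlinarith [this]
          | succ k =>
            have hk : h k.succ = h' k := by
              simp [hhdef, hc0, hw, hh', hy]
            have : ∑ j, α j * A k.succ j.succ = B.mulVec α k := by
              rw [Matrix.mulVec]
              simp [dotProduct, hB, Matrix.submatrix_apply, mul_comm]
            rw [hk, this, hBα]
        rw [hrepr]
        apply Submodule.sum_mem
        intro j _
        induction j using Fin.cases with
        | zero => simp only [Fin.cons_zero, zero_smul]; exact H.zero_mem
        | succ k =>
          simp only [Fin.cons_succ]
          exact H.smul_mem _ (Submodule.subset_span ⟨k.succ, Fin.succ_ne_zero k, rfl⟩)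
      calc distToSet c0 ↑H ≤ vnorm (c0 - h) := dist_le c0 H h hmem
        _ = |a| / Real.sqrt d := by
            have : c0 - h = s • w := by rw [hhdef]; ring_nf
            rw [this]
            unfold vnorm
            have : ∑ i, (s • w) i ^ 2 = s ^ 2 * ∑ i, w i ^ 2 := by
              rw [Finset.mul_sum]
              exact Finset.sum_congr rfl fun i _ => by simp [mul_pow]
            rw [this, Real.sqrt_mul (sq_nonneg _), Real.sqrt_sq_eq_abs]
            have hw2 : Real.sqrt (∑ i, w i ^ 2) = Real.sqrt d := hwn
            rw [hw2, hs, abs_div, abs_of_pos hd0]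
            have key : Real.sqrt d * Real.sqrt d = d := Real.mul_self_sqrt hd0.le
            rw [div_mul_eq_mul_div, div_eq_div_iff (ne_of_gt hd0) (ne_of_gt hsd),
              mul_assoc, key]
    · -- |a|/√d ≤ dist
      have := perp_le_dist c0 w H hperp (hwn ▸ hsd)
      rwa [hwn, ← ha] at this
end
end

section
/- Fix K ≥ 1. There exists a constant N(K) such that the following holds for every n and every p ∈ (0,1) with np ≥ N(K): if A is a real n×n matrix with ‖A − p J_n‖ ≤ K √(np), then (i) A has a real eigenvalue λ₀ with |λ₀| ≥ np/2, and (ii) there is a corresponding eigenvector v₀ ∈ S^{n−1} satisfying ‖v₀ − n^{−1/2} 𝟏‖₂ ≤ 16K/√(np), where 𝟏 ∈ R^n is the all-ones vector. -/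
open MeasureTheory ProbabilityTheory Filter Matrix

noncomputable section

open RealInnerProductSpace

lemma vnorm_eq_norm {n : ℕ} (x : EuclideanSpace ℝ (Fin n)) : vnorm x = ‖x‖ := by
  rw [EuclideanSpace.norm_eq]
  simp [vnorm, Real.norm_eq_abs, sq_abs]


lemma proj_norm_le {n : ℕ} (u : EuclideanSpace ℝ (Fin n)) (hu : ‖u‖ = 1)
    (z : EuclideanSpace ℝ (Fin n)) : ‖z - ⟪u, z⟫ • u‖ ≤ ‖z‖ := by
  have h1 : ‖z - ⟪u, z⟫ • u‖ ^ 2 = ‖z‖ ^ 2 - ⟪u, z⟫ ^ 2 := by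
    rw [norm_sub_sq_real, real_inner_smul_right, norm_smul]
    rw [real_inner_comm]
    simp [hu, mul_pow, sq_abs]
    ring
  nlinarith [norm_nonneg (z - ⟪u, z⟫ • u), norm_nonneg z, sq_nonneg (⟪u, z⟫)]


section algebra
variable {V : Type*} [AddCommGroup V] [Module ℝ V]

lemma alg_dec (a a' : ℝ) (P P' : V) : a • P - a' • P' = a • (P - P') + (a - a') • P' := by
  module

lemma alg_eigen (u w : V) (M cc b : ℝ) :
    (M * b) • u + b • (cc • u + (M + cc) • w) = (M + cc) • (b • (u + w)) := by
  module

lemma alg_vu (u w : V) (b : ℝ) : b • (u + w) - u = (b - 1) • u + b • w := by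
  module

end algebra

set_option maxHeartbeats 1000000 in
private lemma key {n : ℕ} (M ε : ℝ) (hε : 0 < ε) (hM : 8 * ε ≤ M)
    (u : EuclideanSpace ℝ (Fin n)) (hu : ‖u‖ = 1)
    (T : EuclideanSpace ℝ (Fin n) → EuclideanSpace ℝ (Fin n))
    (hTsub : ∀ x y, T (x - y) = T x - T y)
    (hTsmul : ∀ (c : ℝ) (x), T (c • x) = c • T x)
    (hT : ∀ x, ‖T x‖ ≤ ε * ‖x‖) :
    ∃ (lam : ℝ) (v : EuclideanSpace ℝ (Fin n)), ‖v‖ = 1 ∧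
      (M * ⟪u, v⟫) • u + T v = lam • v ∧ M / 2 ≤ lam ∧ ‖v - u‖ ≤ 6 * ε / M := by
  have hM0 : 0 < M := by linarith
  have huu : ⟪u, u⟫ = 1 := by rw [real_inner_self_eq_norm_sq, hu]; norm_num
  set c : EuclideanSpace ℝ (Fin n) → ℝ := fun w => ⟪u, T (u + w)⟫ with hc
  set lam0 : EuclideanSpace ℝ (Fin n) → ℝ := fun w => M + c w with hlam0
  have hTb : ∀ w : EuclideanSpace ℝ (Fin n), ‖w‖ ≤ 1 → ‖T (u + w)‖ ≤ 2 * ε := by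
    intro w hw
    calc ‖T (u + w)‖ ≤ ε * ‖u + w‖ := hT _
      _ ≤ ε * (‖u‖ + ‖w‖) := by nlinarith [norm_add_le u w]
      _ ≤ 2 * ε := by rw [hu]; nlinarith
  have hcb : ∀ w : EuclideanSpace ℝ (Fin n), ‖w‖ ≤ 1 → |c w| ≤ 2 * ε := by
    intro w hw
    calc |c w| ≤ ‖u‖ * ‖T (u + w)‖ := abs_real_inner_le_norm _ _
      _ ≤ 2 * ε := by rw [hu, one_mul]; exact hTb w hw
  have hlb : ∀ w : EuclideanSpace ℝ (Fin n), ‖w‖ ≤ 1 → 3 * M / 4 ≤ lam0 w := by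
    intro w hw
    have := hcb w hw
    have := abs_le.mp this
    simp only [hlam0]
    linarith [this.1]
  have hlpos : ∀ w : EuclideanSpace ℝ (Fin n), ‖w‖ ≤ 1 → 0 < lam0 w := by
    exact fun w hw => lt_of_lt_of_le (by linarith : (0:ℝ) < 3 * M / 4) (hlb w hw)
  -- the set
  set s : Set (EuclideanSpace ℝ (Fin n)) := {w | ⟪u, w⟫ = 0 ∧ ‖w‖ ≤ 1} with hs
  have hsclosed : IsClosed s := by
    apply IsClosed.inter
    · exact isClosed_eq (Continuous.inner continuous_const continuous_id) continuous_const
    · exact isClosed_le continuous_norm continuous_const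
  have h0s : (0 : EuclideanSpace ℝ (Fin n)) ∈ s := ⟨inner_zero_right u, by simp⟩
  haveI : Nonempty s := ⟨⟨0, h0s⟩⟩
  haveI : CompleteSpace s := hsclosed.completeSpace_coe
  -- the map
  set G : EuclideanSpace ℝ (Fin n) → EuclideanSpace ℝ (Fin n) :=
    fun w => (lam0 w)⁻¹ • (T (u + w) - c w • u) with hG
  have hGnorm : ∀ w : EuclideanSpace ℝ (Fin n), ‖w‖ ≤ 1 → ‖G w‖ ≤ 8 * ε / (3 * M) := by
    intro w hw
    have h1 : ‖T (u + w) - c w • u‖ ≤ 2 * ε := le_trans (proj_norm_le u hu _) (hTb w hw)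
    have h2 := hlb w hw
    have h3 := hlpos w hw
    calc ‖G w‖ = (lam0 w)⁻¹ * ‖T (u + w) - c w • u‖ := by
          simp only [hG]
          rw [norm_smul, Real.norm_eq_abs, abs_of_pos (inv_pos.mpr h3)]
      _ ≤ (3 * M / 4)⁻¹ * (2 * ε) := by
          have hi : (lam0 w)⁻¹ ≤ (3 * M / 4)⁻¹ := inv_anti₀ (by linarith) h2
          exact mul_le_mul hi h1 (norm_nonneg _) (by positivity)
      _ = 8 * ε / (3 * M) := by field_simp; ring
  have hGmem : ∀ w ∈ s, G w ∈ s := by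
    intro w hw
    constructor
    · rw [hG]
      simp only [real_inner_smul_right, inner_sub_right, real_inner_smul_right, huu]
      simp [hc]
    · refine le_trans (hGnorm w hw.2) ?_
      rw [div_le_one (by linarith)]
      linarith
  set F : s → s := fun w => ⟨G w, hGmem w w.2⟩ with hF
  -- contraction
  have hlip : ∀ w w' : s, dist (F w) (F w') ≤ (1/2 : ℝ) * dist w w' := by
    intro ⟨w, hw⟩ ⟨w', hw'⟩
    rw [Subtype.dist_eq, Subtype.dist_eq, dist_eq_norm, dist_eq_norm]
    simp only [hF]
    set z := T (u + w) with hz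
    set z' := T (u + w') with hz'
    have hzz' : z - z' = T (w - w') := by rw [hz, hz', ← hTsub]; congr 1; abel
    have hcd : c w - c w' = ⟪u, z - z'⟫ := by simp [hc, inner_sub_right, hz, hz']
    have hdec : G w - G w' = (lam0 w)⁻¹ • ((z - c w • u) - (z' - c w' • u))
        + ((lam0 w)⁻¹ - (lam0 w')⁻¹) • (z' - c w' • u) := by
      simp only [hG]
      exact alg_dec _ _ _ _
    have hkey : (z - c w • u) - (z' - c w' • u) = (z - z') - ⟪u, z - z'⟫ • u := by
      rw [← hcd]; simp [sub_smul]; abel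
    have h1 : ‖(z - c w • u) - (z' - c w' • u)‖ ≤ ε * ‖w - w'‖ := by
      rw [hkey]
      refine le_trans (proj_norm_le u hu _) ?_
      rw [hzz']; exact hT _
    have hl := hlb w hw.2
    have hl' := hlb w' hw'.2
    have hlp := hlpos w hw.2
    have hlp' := hlpos w' hw'.2
    have h2 : |(lam0 w)⁻¹ - (lam0 w')⁻¹| ≤ (ε * ‖w - w'‖) / ((3*M/4) * (3*M/4)) := by
      have hdiff : (lam0 w)⁻¹ - (lam0 w')⁻¹ = (lam0 w' - lam0 w) / (lam0 w * lam0 w') := by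
        field_simp
      rw [hdiff, abs_div]
      have hnum : |lam0 w' - lam0 w| ≤ ε * ‖w - w'‖ := by
        have : lam0 w' - lam0 w = ⟪u, z' - z⟫ := by
          simp [hlam0, hc, inner_sub_right, hz, hz']
        rw [this]
        calc |⟪u, z' - z⟫| ≤ ‖u‖ * ‖z' - z‖ := abs_real_inner_le_norm _ _
          _ ≤ ε * ‖w - w'‖ := by
              rw [hu, one_mul, ← neg_sub z z', norm_neg, hzz']
              have := hT (w - w')
              exact this
      have hden : (3*M/4) * (3*M/4) ≤ |lam0 w * lam0 w'| := by
        rw [abs_of_pos (by positivity)]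
        nlinarith
      apply div_le_div₀ (by positivity) hnum (by positivity) hden
    have h3 : ‖z' - c w' • u‖ ≤ 2 * ε := le_trans (proj_norm_le u hu _) (hTb w' hw'.2)
    calc ‖G w - G w'‖
        ≤ ‖(lam0 w)⁻¹ • ((z - c w • u) - (z' - c w' • u))‖
          + ‖((lam0 w)⁻¹ - (lam0 w')⁻¹) • (z' - c w' • u)‖ := by rw [hdec]; exact norm_add_le _ _
      _ ≤ (lam0 w)⁻¹ * (ε * ‖w - w'‖) + ((ε * ‖w - w'‖) / ((3*M/4) * (3*M/4))) * (2 * ε) := by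
          gcongr
          · rw [norm_smul, Real.norm_eq_abs, abs_of_pos (inv_pos.mpr hlp)]
            exact mul_le_mul_of_nonneg_left h1 (by positivity)
          · rw [norm_smul, Real.norm_eq_abs]
            exact mul_le_mul h2 h3 (norm_nonneg _) (by positivity)
      _ ≤ (1/2) * ‖w - w'‖ := by
          have hinv : (lam0 w)⁻¹ ≤ (3*M/4)⁻¹ := inv_anti₀ (by linarith) hl
          have hd : (0:ℝ) ≤ ‖w - w'‖ := norm_nonneg _
          have e1 : (lam0 w)⁻¹ * (ε * ‖w - w'‖) ≤ (3*M/4)⁻¹ * (ε * ‖w - w'‖) := by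
            exact mul_le_mul_of_nonneg_right hinv (by positivity)
          have e2 : (3*M/4)⁻¹ * (ε * ‖w - w'‖) ≤ (1/6) * ‖w - w'‖ := by
            rw [← mul_assoc]
            apply mul_le_mul_of_nonneg_right _ hd
            rw [inv_mul_le_iff₀ (by linarith)]
            linarith
          have h64 : 64 * ε ^ 2 ≤ M ^ 2 := by nlinarith
          have e3 : ((ε * ‖w - w'‖) / ((3*M/4) * (3*M/4))) * (2 * ε) ≤ (1/18) * ‖w - w'‖ := by
            rw [div_mul_eq_mul_div, div_le_iff₀ (by positivity)]
            calc ε * ‖w - w'‖ * (2 * ε) = (2 * ε ^ 2) * ‖w - w'‖ := by ring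
              _ ≤ (M ^ 2 / 32) * ‖w - w'‖ := by
                  apply mul_le_mul_of_nonneg_right _ hd
                  linarith
              _ = 1/18 * ‖w - w'‖ * (3*M/4 * (3*M/4)) := by ring
          linarith
  have hcontr : ContractingWith (1/2 : NNReal) F := by
    constructor
    · have : ((1/2 : NNReal) : ℝ) < ((1 : NNReal) : ℝ) := by norm_num
      exact_mod_cast this
    · apply LipschitzWith.of_dist_le_mul
      intro x y
      have := hlip x y
      simpa using this
  have hwf : F (hcontr.fixedPoint F) = hcontr.fixedPoint F := hcontr.fixedPoint_isFixedPt
  set wf := hcontr.fixedPoint F with hwfdef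
  set w : EuclideanSpace ℝ (Fin n) := (wf : EuclideanSpace ℝ (Fin n)) with hwdef
  have hws : w ∈ s := wf.2
  have hGw : G w = w := congrArg Subtype.val hwf
  have hlp := hlpos w hws.2
  have hwnorm : ‖w‖ ≤ 8 * ε / (3 * M) := by rw [← hGw]; exact hGnorm w hws.2
  have h7 : lam0 w • G w = T (u + w) - c w • u := by
    simp only [hG]
    rw [smul_smul, mul_inv_cancel₀ (ne_of_gt hlp), one_smul]
  have h6 : T (u + w) - c w • u = lam0 w • w := by
    rw [← h7]
    exact congrArg (fun y => lam0 w • y) hGw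
  have hTuw : T (u + w) = c w • u + lam0 w • w := by
    rw [← h6]; abel
  -- build v
  set b : ℝ := ‖u + w‖ with hb
  have hb2 : b ^ 2 = 1 + ‖w‖ ^ 2 := by
    rw [hb, norm_add_sq_real, hu, hws.1]; ring
  have hb1 : 1 ≤ b := by nlinarith [norm_nonneg (u + w), sq_nonneg ‖w‖]
  have hbpos : 0 < b := by linarith
  set v : EuclideanSpace ℝ (Fin n) := b⁻¹ • (u + w) with hv
  have hvnorm : ‖v‖ = 1 := by
    rw [hv, norm_smul, Real.norm_eq_abs, abs_of_pos (inv_pos.mpr hbpos), ← hb,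
      inv_mul_cancel₀ (ne_of_gt hbpos)]
  have huv : ⟪u, v⟫ = b⁻¹ := by
    rw [hv, real_inner_smul_right, inner_add_right, huu, hws.1]; ring
  refine ⟨lam0 w, v, hvnorm, ?_, ?_, ?_⟩
  · rw [huv, hv, hTsmul, hTuw]
    simp only [hlam0]
    exact alg_eigen u w M (c w) b⁻¹
  · linarith [hlb w hws.2]
  · have hwle : ‖w‖ ≤ 1 := hws.2
    have hvu : v - u = (b⁻¹ - 1) • u + b⁻¹ • w := by
      rw [hv]; exact alg_vu u w b⁻¹
    have hbinv : b⁻¹ ≤ 1 := by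
      rw [inv_le_one_iff₀]; right; exact hb1
    have h1b : 1 - b⁻¹ ≤ ‖w‖ ^ 2 := by
      have he : 1 - b⁻¹ = (b - 1) / b := by field_simp
      have hle : (b - 1) / b ≤ b - 1 := div_le_self (by linarith) hb1
      nlinarith
    calc ‖v - u‖ ≤ ‖(b⁻¹ - 1) • u‖ + ‖b⁻¹ • w‖ := by rw [hvu]; exact norm_add_le _ _
      _ ≤ (1 - b⁻¹) + ‖w‖ := by
          rw [norm_smul, norm_smul, hu, mul_one, Real.norm_eq_abs, Real.norm_eq_abs]
          have : |b⁻¹ - 1| = 1 - b⁻¹ := by rw [abs_sub_comm, abs_of_nonneg]; linarith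
          rw [this, abs_of_pos (inv_pos.mpr hbpos)]
          nlinarith [norm_nonneg w]
      _ ≤ 2 * ‖w‖ := by nlinarith [norm_nonneg w]
      _ ≤ 2 * (8 * ε / (3 * M)) := by linarith
      _ = 16 * ε / (3 * M) := by ring
      _ ≤ 6 * ε / M := by
          rw [div_le_div_iff₀ (by positivity) hM0]
          nlinarith [mul_nonneg hε.le hM0.le]

set_option maxHeartbeats 1000000 in
/-- any matrix close to `p J_n` in operator norm has a large real eigenvalue
`λ₀` with `|λ₀| ≥ np/2`, whose unit eigenvector is close to `n^{-1/2} 𝟏` (Lemma 5.6). -/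
theorem large_eigenvalue_near_ones (K : ℝ) (hK : 1 ≤ K) :
    ∃ N : ℝ, ∀ (n : ℕ) (p : ℝ), 0 < p → p < 1 → N ≤ (n : ℝ) * p →
      ∀ A : Matrix (Fin n) (Fin n) ℝ,
        opNorm (A - p • Matrix.of (fun _ _ : Fin n => (1 : ℝ))) ≤ K * Real.sqrt ((n : ℝ) * p) →
        ∃ (lam : ℝ) (v : Fin n → ℝ),
          vnorm v = 1 ∧ A.mulVec v = lam • v ∧ (n : ℝ) * p / 2 ≤ |lam| ∧
          vnorm (v - fun _ => 1 / Real.sqrt n) ≤ 16 * K / Real.sqrt ((n : ℝ) * p) := by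
  refine ⟨64 * K ^ 2, ?_⟩
  intro n p hp hp1 hN A hA
  set M : ℝ := (n : ℝ) * p with hMdef
  set E : Matrix (Fin n) (Fin n) ℝ := A - p • Matrix.of (fun _ _ : Fin n => (1 : ℝ)) with hE
  have hK2 : 1 ≤ K ^ 2 := by nlinarith
  have hM64 : 64 ≤ M := by nlinarith
  have hM0 : 0 < M := by linarith
  have hn0 : 0 < n := by
    rcases Nat.eq_zero_or_pos n with h | h
    · subst h; rw [hMdef] at hM0; simp at hM0
    · exact h
  have hnR : 0 < (n : ℝ) := by exact_mod_cast hn0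
  have hsqM : Real.sqrt M * Real.sqrt M = M := Real.mul_self_sqrt hM0.le
  have hsqMpos : 0 < Real.sqrt M := Real.sqrt_pos.mpr hM0
  have hsqn : Real.sqrt (n:ℝ) * Real.sqrt (n:ℝ) = (n:ℝ) := Real.mul_self_sqrt hnR.le
  have hsqnpos : 0 < Real.sqrt (n:ℝ) := Real.sqrt_pos.mpr hnR
  set ε : ℝ := K * Real.sqrt M with hεdef
  have hεpos : 0 < ε := by positivity
  have h8K : 8 * K ≤ Real.sqrt M := by
    rw [show (8:ℝ) * K = Real.sqrt ((8 * K)^2) from (Real.sqrt_sq (by linarith)).symm]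
    apply Real.sqrt_le_sqrt
    nlinarith
  have h8ε : 8 * ε ≤ M := by
    calc 8 * ε = (8 * K) * Real.sqrt M := by rw [hεdef]; ring
      _ ≤ Real.sqrt M * Real.sqrt M := by
          apply mul_le_mul_of_nonneg_right h8K hsqMpos.le
      _ = M := hsqM
  -- the unit vector u
  set u : EuclideanSpace ℝ (Fin n) := WithLp.toLp 2 (fun _ => 1 / Real.sqrt (n:ℝ)) with hu_def
  have hu : ‖u‖ = 1 := by
    rw [EuclideanSpace.norm_eq]
    have h : ∀ i : Fin n, ‖u i‖ ^ 2 = 1 / (n:ℝ) := by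
      intro i
      rw [hu_def]
      simp only [Real.norm_eq_abs, sq_abs]
      rw [div_pow, one_pow, sq, hsqn]
    rw [Finset.sum_congr rfl (fun i _ => h i)]
    rw [Finset.sum_const, Finset.card_univ, Fintype.card_fin, nsmul_eq_mul]
    rw [mul_one_div, div_self (ne_of_gt hnR), Real.sqrt_one]
  -- the perturbation as a map on Euclidean space
  set T : EuclideanSpace ℝ (Fin n) → EuclideanSpace ℝ (Fin n) := fun x => WithLp.toLp 2 (E.mulVec x) with hTdef
  -- operator norm bound
  have hBdd : BddAbove {r | ∃ x : Fin n → ℝ, vnorm x = 1 ∧ r = vnorm (E.mulVec x)} := by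
    refine ⟨Real.sqrt (∑ i, ∑ j, E i j ^ 2), ?_⟩
    rintro r ⟨x, hx, rfl⟩
    have hx1 : ∑ i, x i ^ 2 = 1 := Real.sqrt_eq_one.mp hx
    apply Real.sqrt_le_sqrt
    calc ∑ i, (E.mulVec x) i ^ 2 = ∑ i, (∑ j, E i j * x j) ^ 2 := by
          simp [Matrix.mulVec, dotProduct]
      _ ≤ ∑ i, ((∑ j, E i j ^ 2) * ∑ j, x j ^ 2) := by
          apply Finset.sum_le_sum
          intro i _
          exact Finset.sum_mul_sq_le_sq_mul_sq _ _ _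
      _ = ∑ i, ∑ j, E i j ^ 2 := by rw [← Finset.sum_mul]; simp [hx1]
  have hunit : ∀ x : Fin n → ℝ, vnorm x = 1 → vnorm (E.mulVec x) ≤ ε := by
    intro x hx
    exact le_trans (le_csSup hBdd ⟨x, hx, rfl⟩) hA
  have hT : ∀ x : EuclideanSpace ℝ (Fin n), ‖T x‖ ≤ ε * ‖x‖ := by
    intro x
    by_cases hx0 : x = 0
    · have hz : T 0 = 0 := by
        simp only [hTdef]
        simp
      rw [hx0, hz]; simp
    · have hc : 0 < ‖x‖ := norm_pos_iff.mpr hx0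
      set y : EuclideanSpace ℝ (Fin n) := ‖x‖⁻¹ • x with hy
      have hy1 : vnorm y = 1 := by
        rw [vnorm_eq_norm, hy, norm_smul, Real.norm_eq_abs, abs_of_pos (inv_pos.mpr hc),
          inv_mul_cancel₀ (ne_of_gt hc)]
      have h2 : vnorm (T y) ≤ ε := hunit y hy1
      rw [vnorm_eq_norm] at h2
      have heq : T y = ‖x‖⁻¹ • T x := by
        simp only [hTdef, hy]
        simp [Matrix.mulVec_smul]
      rw [heq, norm_smul, Real.norm_eq_abs, abs_of_pos (inv_pos.mpr hc)] at h2
      calc ‖T x‖ = ‖x‖ * (‖x‖⁻¹ * ‖T x‖) := by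
            field_simp
        _ ≤ ‖x‖ * ε := mul_le_mul_of_nonneg_left h2 hc.le
        _ = ε * ‖x‖ := by ring
  -- decomposition A = M u uᵀ + E  (as applied to vectors)
  have hdecomp : ∀ x : EuclideanSpace ℝ (Fin n),
      (WithLp.toLp 2 (A.mulVec x) : EuclideanSpace ℝ (Fin n)) = (M * ⟪u, x⟫) • u + T x := by
    intro x
    ext i
    have hEx : T x i = (∑ j, A i j * x j) - p * ∑ j, x j := by
      simp only [hTdef]
      simp [hE, Matrix.mulVec, dotProduct, Matrix.sub_apply, sub_mul,
        Finset.sum_sub_distrib, Finset.mul_sum]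
    have hinner : ⟪u, x⟫ = (∑ j, x j) / Real.sqrt (n:ℝ) := by
      rw [PiLp.inner_apply]
      simp only [RCLike.inner_apply, conj_trivial, hu_def, PiLp.toLp_apply]
      rw [Finset.sum_div]
      congr 1
      funext j
      ring
    show (A.mulVec x) i = (M * ⟪u, x⟫) * u i + T x i
    rw [hEx, hinner]
    have hAx : (A.mulVec x) i = ∑ j, A i j * x j := by
      simp [Matrix.mulVec, dotProduct]
    rw [hAx, hu_def, hMdef]
    field_simp
    rw [Real.sq_sqrt hnR.le]
    ring
  obtain ⟨lam, v, hv1, heig, hlam, hclose⟩ :=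
    key M ε hεpos h8ε u hu T
      (fun x y => by
        simp only [hTdef]
        simp [Matrix.mulVec_sub])
      (fun c x => by
        simp only [hTdef]
        simp [Matrix.mulVec_smul])
      hT
  refine ⟨lam, v, ?_, ?_, ?_, ?_⟩
  · exact (vnorm_eq_norm v).trans hv1
  · have := hdecomp v
    rw [heig] at this
    simpa using congrArg WithLp.ofLp this
  · exact le_trans hlam (le_abs_self lam)
  · have hfinal : ‖v - u‖ ≤ 16 * K / Real.sqrt M := by
      refine le_trans hclose ?_
      rw [hεdef]
      have heq : 6 * (K * Real.sqrt M) / M = 6 * K / Real.sqrt M := by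
        rw [div_eq_div_iff (ne_of_gt hM0) (ne_of_gt hsqMpos)]
        linear_combination (6 * K) * hsqM
      rw [heq]
      rw [div_le_div_iff₀ hsqMpos hsqMpos]
      nlinarith
    exact le_of_eq_of_le (vnorm_eq_norm (v - u)) hfinal
end
end
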